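/- (Termination of the Cayley reduction process.) Fix (P₀, A₀) where P₀ is an n-tuple of affinely independent lattice simplices and A₀ an m×n nonnegative integer matrix. Consider the rewriting process on finite sets 𝒮 of triples (P, A, φ), starting from {(P₀, A₀, id)}, in which each move replaces an element (P,A,φ) with A j-reducible by the elements of f_j(P,A,φ) as defined in Section 3.4.1 of the paper (splitting off a vertex, passing to a facet array with an extra row, or collapsing a column used once). Then every sequence of moves terminates: no infinite sequence of moves exists. -/

import Mathlib

/-- A state of the Cayley reduction process: an array of lattice simplices in `ℤ^d`
(given by their vertex sets) together with a matrix of nonnegative integers with `n`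
columns, presented as its list of rows. -/
abbrev Elt (d n : ℕ) := (Fin n → Finset (Fin d → ℤ)) × List (Fin n → ℕ)

/-- The moves `f_{ij}` of the Cayley reduction process of §3.4.1: a move at `(P, A)`
chooses a column `j` and a row `r` with `r j > 0` and either
(a) if `dim Pⱼ = 0`, decrements the `(i,j)` entry;
(b) if `dim Pⱼ > 0` and the `j`-th column sum is `> 1`, splits into the decremented
state and the state with `Pⱼ` replaced by the facet opposite a vertex `v` and the
decremented row inserted above row `i`;
(c) if `dim Pⱼ > 0` and the `j`-th column sum is `1`, replaces `Pⱼ` by a point and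
row `i` by `dim Pⱼ + 1` copies of the decremented row. -/
inductive ElemStep {d n : ℕ} : Elt d n → Multiset (Elt d n) → Prop
  | point (V : Fin n → Finset (Fin d → ℤ)) (A₁ A₂ : List (Fin n → ℕ))
      (r : Fin n → ℕ) (j : Fin n) (hr : 0 < r j) (hcard : (V j).card = 1) :
      ElemStep (V, A₁ ++ r :: A₂)
        {(V, A₁ ++ Function.update r j (r j - 1) :: A₂)}
  | split (V : Fin n → Finset (Fin d → ℤ)) (A₁ A₂ : List (Fin n → ℕ))
      (r : Fin n → ℕ) (j : Fin n) (hr : 0 < r j) (hcard : 2 ≤ (V j).card)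
      (hcol : 1 < ((A₁ ++ r :: A₂).map (fun q => q j)).sum)
      (v : Fin d → ℤ) (hv : v ∈ V j) :
      ElemStep (V, A₁ ++ r :: A₂)
        {(V, A₁ ++ Function.update r j (r j - 1) :: A₂),
         (Function.update V j ((V j).erase v),
           A₁ ++ Function.update r j (r j - 1) :: r :: A₂)}
  | collapse (V : Fin n → Finset (Fin d → ℤ)) (A₁ A₂ : List (Fin n → ℕ))
      (r : Fin n → ℕ) (j : Fin n) (hr : 0 < r j) (hcard : 2 ≤ (V j).card)
      (hcol : ((A₁ ++ r :: A₂).map (fun q => q j)).sum = 1) :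
      ElemStep (V, A₁ ++ r :: A₂)
        {(Function.update V j {0},
          A₁ ++ List.replicate ((V j).card) (Function.update r j 0) ++ A₂)}

/-- A move on a configuration (a multiset of states): replace one element by the
result of a move applied to it. -/
def Step {d n : ℕ} (S T : Multiset (Elt d n)) : Prop :=
  ∃ a ∈ S, ∃ R : Multiset (Elt d n), ElemStep a R ∧ T = S.erase a + R


section CayleyAux

variable {d n : ℕ}

/-- The measure on states: (total number of vertices, total sum of matrix entries),
ordered lexicographically. -/
def cayleyMu (x : Elt d n) : ℕ ×ₗ ℕ :=
  toLex (∑ j, (x.1 j).card, (x.2.map fun r => ∑ j, r j).sum)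

theorem cayley_rowsum_update (r : Fin n → ℕ) (j : Fin n) (m : ℕ) :
    ∑ k, Function.update r j m k = m + ∑ k ∈ Finset.univ \ {j}, r k :=
  Finset.sum_update_of_mem (Finset.mem_univ j) _ _

theorem cayley_rowsum_split (r : Fin n → ℕ) (j : Fin n) :
    ∑ k, r k = r j + ∑ k ∈ Finset.univ \ {j}, r k := by
  conv_lhs => rw [← Function.update_eq_self j r]
  exact cayley_rowsum_update r j (r j)

theorem cayley_vsum_update (V : Fin n → Finset (Fin d → ℤ)) (j : Fin n)
    (W : Finset (Fin d → ℤ)) :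
    ∑ k, (Function.update V j W k).card
      = W.card + ∑ k ∈ Finset.univ \ {j}, (V k).card := by
  have := Finset.sum_update_of_mem (Finset.mem_univ j) (fun k => (V k).card) W.card
  rw [← this]
  apply Finset.sum_congr rfl
  intro k _
  by_cases h : k = j <;> simp [h, Function.update]

theorem cayley_vsum_split (V : Fin n → Finset (Fin d → ℤ)) (j : Fin n) :
    ∑ k, (V k).card = (V j).card + ∑ k ∈ Finset.univ \ {j}, (V k).card := by
  conv_lhs => rw [← Function.update_eq_self j V]
  exact cayley_vsum_update V j (V j)

/-- Decrementing an entry strictly decreases the measure. -/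
theorem cayleyMu_dec (V : Fin n → Finset (Fin d → ℤ)) (A₁ A₂ : List (Fin n → ℕ))
    (r : Fin n → ℕ) (j : Fin n) (hr : 0 < r j) :
    cayleyMu ((V, A₁ ++ Function.update r j (r j - 1) :: A₂) : Elt d n)
      < cayleyMu ((V, A₁ ++ r :: A₂) : Elt d n) := by
  refine Prod.Lex.right _ ?_
  simp only [List.map_append, List.map_cons, List.sum_append, List.sum_cons]
  rw [cayley_rowsum_update r j (r j - 1), cayley_rowsum_split r j]
  exact Nat.add_lt_add_left (Nat.add_lt_add_right (Nat.add_lt_add_right (Nat.sub_lt hr Nat.one_pos) _) _) _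

/-- Shrinking a vertex set strictly decreases the measure. -/
theorem cayleyMu_shrink (V : Fin n → Finset (Fin d → ℤ)) (W : Finset (Fin d → ℤ))
    (j : Fin n) (hW : W.card < (V j).card) (A B : List (Fin n → ℕ)) :
    cayleyMu ((Function.update V j W, A) : Elt d n) < cayleyMu ((V, B) : Elt d n) := by
  refine Prod.Lex.left _ _ ?_
  show ∑ k, (Function.update V j W k).card < ∑ k, (V k).card
  rw [cayley_vsum_update V j W, cayley_vsum_split V j]
  exact Nat.add_lt_add_right hW _

/-- Every state produced by a move has strictly smaller measure. -/
theorem cayleyMu_lt_of_elemStep {a : Elt d n} {R : Multiset (Elt d n)}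
    (h : ElemStep a R) : ∀ x ∈ R, cayleyMu x < cayleyMu a := by
  intro x hx
  cases h with
  | point V A₁ A₂ r j hr hcard =>
      rw [Multiset.mem_singleton] at hx
      subst hx
      exact cayleyMu_dec V A₁ A₂ r j hr
  | split V A₁ A₂ r j hr hcard hcol v hv =>
      rw [Multiset.insert_eq_cons, Multiset.mem_cons, Multiset.mem_singleton] at hx
      rcases hx with rfl | rfl
      · exact cayleyMu_dec V A₁ A₂ r j hr
      · refine cayleyMu_shrink V _ j ?_ _ _
        rw [Finset.card_erase_of_mem hv]
        exact Nat.sub_lt (Nat.lt_of_lt_of_le Nat.two_pos hcard) Nat.one_pos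
  | collapse V A₁ A₂ r j hr hcard hcol =>
      rw [Multiset.mem_singleton] at hx
      subst hx
      refine cayleyMu_shrink V _ j ?_ _ _
      simpa using Nat.lt_of_lt_of_le Nat.one_lt_two hcard

theorem cayley_no_inf_chain {α : Type*} {r : α → α → Prop} (h : WellFounded r)
    (f : ℕ → α) (hf : ∀ k, r (f (k + 1)) (f k)) : False := by
  have key : ∀ a, ∀ k, f k = a → False := by
    intro a
    induction a using WellFounded.induction h with
    | _ a ih =>
      intro k hk
      exact ih (f (k + 1)) (hk ▸ hf k) (k + 1) rfl
  exact key (f 0) 0 rfl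

end CayleyAux

/-- termination of the Cayley reduction process: there is no infinite
sequence of moves. -/
theorem stmt_11 (d n : ℕ) :
    ¬ ∃ seq : ℕ → Multiset (Elt d n), ∀ k, Step (seq k) (seq (k + 1)) := by
  rintro ⟨seq, hseq⟩
  set rel : Elt d n → Elt d n → Prop := fun x y => cayleyMu x < cayleyMu y with hrel
  have hwf : WellFounded rel := InvImage.wf cayleyMu wellFounded_lt
  have hchain : ∀ k, Relation.CutExpand rel (seq (k + 1)) (seq k) := by
    intro k
    obtain ⟨a, ha, R, hstep, hT⟩ := hseq k
    refine ⟨R, a, cayleyMu_lt_of_elemStep hstep, ?_⟩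
    rw [hT, add_right_comm]
    congr 1
    rw [add_comm, Multiset.singleton_add, Multiset.cons_erase ha]
  exact cayley_no_inf_chain hwf.cutExpand seq hchain
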